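/- Let P be the Petersen graph and G the graph obtained from P by subdividing every edge twice. Then gap(G) = 0. -/

import Mathlib

structure LoopGraph (V : Type*) where
  Adj : V → V → Prop
  symm : ∀ u v, Adj u v → Adj v u

namespace LoopGraph

variable {V : Type*} [Fintype V] [DecidableEq V]

/-- `C` is a set-join cover of `G`: a finite family of set-joins `K ∨ L`
(with `K`, `L` nonempty) whose edge sets union to `E(G)`. -/
def IsCover (G : LoopGraph V) (C : Finset (Finset V × Finset V)) : Prop :=
  (∀ p ∈ C, p.1.Nonempty ∧ p.2.Nonempty) ∧
  (∀ u v : V, G.Adj u v ↔ ∃ p ∈ C, (u ∈ p.1 ∧ v ∈ p.2) ∨ (u ∈ p.2 ∧ v ∈ p.1))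

/-- The component set of a set-join cover: all sets occurring as a part. -/
def sjComponents (C : Finset (Finset V × Finset V)) : Finset (Finset V) :=
  C.image Prod.fst ∪ C.image Prod.snd

/-- The SNT-rank: minimal number of distinct components over all set-join covers. -/
noncomputable def stp (G : LoopGraph V) : ℕ :=
  sInf {n | ∃ C : Finset (Finset V × Finset V), G.IsCover C ∧ (sjComponents C).card = n}

/-- `gap G = |V(G)| - stp G`. -/
noncomputable def gap (G : LoopGraph V) : ℕ :=
  Fintype.card V - G.stp

/-- No vertices `u₁ ≠ u₂`, `v₁ ≠ v₂` with all four pairs `{uᵢ, vⱼ}` edges. -/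
def StronglyC4Free (G : LoopGraph V) : Prop :=
  ¬ ∃ u₁ u₂ v₁ v₂ : V, u₁ ≠ u₂ ∧ v₁ ≠ v₂ ∧
    G.Adj u₁ v₁ ∧ G.Adj u₁ v₂ ∧ G.Adj u₂ v₁ ∧ G.Adj u₂ v₂

/-- Induced subgraph on a finset of vertices. -/
def induce (G : LoopGraph V) (s : Finset V) : LoopGraph {x // x ∈ s} :=
  ⟨fun a b => G.Adj a b, fun _ _ h => G.symm _ _ h⟩

/-- Degree of a vertex; a loop counts twice. -/
noncomputable def deg (G : LoopGraph V) (x : V) : ℕ :=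
  {y | G.Adj x y}.ncard + {y | y = x ∧ G.Adj x y}.ncard

end LoopGraph

open LoopGraph

/-- `zeta ends` is the graph obtained from the multigraph with edge set `E`
and endpoint map `ends` by replacing every edge `e` with endpoints `(x, y)`
by the path `x — (e,0) — (e,1) — y` (each edge subdivided twice). -/
def zeta {V E : Type*} (ends : E → V × V) : LoopGraph (V ⊕ E × Fin 2) where
  Adj x y :=
    (∃ e : E, (x = Sum.inl (ends e).1 ∧ y = Sum.inr (e, 0)) ∨
              (y = Sum.inl (ends e).1 ∧ x = Sum.inr (e, 0))) ∨
    (∃ e : E, (x = Sum.inr (e, 0) ∧ y = Sum.inr (e, 1)) ∨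
              (y = Sum.inr (e, 0) ∧ x = Sum.inr (e, 1))) ∨
    (∃ e : E, (x = Sum.inl (ends e).2 ∧ y = Sum.inr (e, 1)) ∨
              (y = Sum.inl (ends e).2 ∧ x = Sum.inr (e, 1)))
  symm := by
    rintro x y (⟨e, h | h⟩ | ⟨e, h | h⟩ | ⟨e, h | h⟩)
    · exact Or.inl ⟨e, Or.inr h⟩
    · exact Or.inl ⟨e, Or.inl h⟩
    · exact Or.inr (Or.inl ⟨e, Or.inr h⟩)
    · exact Or.inr (Or.inl ⟨e, Or.inl h⟩)
    · exact Or.inr (Or.inr ⟨e, Or.inr h⟩)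
    · exact Or.inr (Or.inr ⟨e, Or.inl h⟩)

attribute [local instance] Classical.propDecidable

/-- The vertices of the Petersen graph, viewed as the Kneser graph `K(5,2)`:
two-element subsets of a five-element set. -/
abbrev PetersenVert : Type := {s : Finset (Fin 5) // s.card = 2}

/-- The edges of the Petersen graph: unordered pairs of disjoint 2-subsets. -/
abbrev PetersenEdge : Type :=
  {p : Sym2 PetersenVert // ∃ a b : PetersenVert, p = s(a, b) ∧ Disjoint a.1 b.1}

/-- The graph obtained from the Petersen graph by subdividing every edge
twice. -/
noncomputable def subdivPetersen :
    LoopGraph (PetersenVert ⊕ PetersenEdge × Fin 2) :=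
  zeta fun e => Quot.out (e.1 : Sym2 PetersenVert)


namespace Stmt17

open Finset Sum

abbrev VV : Type := PetersenVert ⊕ PetersenEdge × Fin 2
abbrev M2 : Type := PetersenEdge × Fin 2

noncomputable def aE (e : PetersenEdge) : PetersenVert :=
  (Quot.out (e.1 : Sym2 PetersenVert)).1

noncomputable def bE (e : PetersenEdge) : PetersenVert :=
  (Quot.out (e.1 : Sym2 PetersenVert)).2

lemma mk_aE_bE (e : PetersenEdge) : s(aE e, bE e) = (e.1 : Sym2 PetersenVert) :=
  Quot.out_eq _

lemma disjE (e : PetersenEdge) : Disjoint (aE e).1 (bE e).1 := by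
  obtain ⟨p, q, hz, hd⟩ := e.2
  have h := mk_aE_bE e
  rw [hz, Sym2.eq_iff] at h
  rcases h with ⟨h1, h2⟩ | ⟨h1, h2⟩
  · rw [h1, h2]; exact hd
  · rw [h1, h2]; exact hd.symm

lemma ne_of_disj (v w : PetersenVert) (hd : Disjoint v.1 w.1) : v ≠ w := by
  intro h
  rw [h] at hd
  have h0 : w.1 = ∅ := disjoint_self.mp hd
  have h2 := w.2
  rw [h0] at h2
  simp at h2

lemma aE_ne_bE (e : PetersenEdge) : aE e ≠ bE e := ne_of_disj _ _ (disjE e)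

lemma fin2 (i : Fin 2) : i = 0 ∨ i = 1 := by omega

noncomputable def near (m : M2) : PetersenVert := if m.2 = 0 then aE m.1 else bE m.1
noncomputable def other (m : M2) : PetersenVert := if m.2 = 0 then bE m.1 else aE m.1

@[simp] lemma near0 (e : PetersenEdge) : near (e, 0) = aE e := if_pos rfl
@[simp] lemma near1 (e : PetersenEdge) : near (e, 1) = bE e := if_neg (by show ¬((1 : Fin 2) = 0); omega)
@[simp] lemma other0 (e : PetersenEdge) : other (e, 0) = bE e := if_pos rfl
@[simp] lemma other1 (e : PetersenEdge) : other (e, 1) = aE e := if_neg (by show ¬((1 : Fin 2) = 0); omega)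

lemma near_ne_other (m : M2) : near m ≠ other m := by
  obtain ⟨e, i⟩ := m
  rcases fin2 i with rfl | rfl
  · simpa using aE_ne_bE e
  · simpa using (aE_ne_bE e).symm

lemma disj_near_other (m : M2) : Disjoint (near m).1 (other m).1 := by
  obtain ⟨e, i⟩ := m
  rcases fin2 i with rfl | rfl
  · simpa using disjE e
  · simpa using (disjE e).symm

lemma e_eq (m : M2) : s(other m, near m) = (m.1.1 : Sym2 PetersenVert) := by
  obtain ⟨e, i⟩ := m
  rcases fin2 i with rfl | rfl
  · simp only [near0, other0]
    rw [Sym2.eq_swap]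
    exact mk_aE_bE e
  · simp only [near1, other1]
    exact mk_aE_bE e

lemma adj_unfold (x y : VV) : subdivPetersen.Adj x y ↔
    (∃ e : PetersenEdge, (x = inl (aE e) ∧ y = inr (e, 0)) ∨
              (y = inl (aE e) ∧ x = inr (e, 0))) ∨
    (∃ e : PetersenEdge, (x = inr (e, 0) ∧ y = inr (e, 1)) ∨
              (y = inr (e, 0) ∧ x = inr (e, 1))) ∨
    (∃ e : PetersenEdge, (x = inl (bE e) ∧ y = inr (e, 1)) ∨
              (y = inl (bE e) ∧ x = inr (e, 1))) := Iff.rfl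

lemma adj_inl_char {w : PetersenVert} {x : VV}
    (h : subdivPetersen.Adj (inl w) x) : ∃ m : M2, x = inr m ∧ near m = w := by
  rw [adj_unfold] at h
  rcases h with ⟨e, ⟨h1, h2⟩ | ⟨h1, h2⟩⟩ | ⟨e, ⟨h1, h2⟩ | ⟨h1, h2⟩⟩ |
    ⟨e, ⟨h1, h2⟩ | ⟨h1, h2⟩⟩
  · exact ⟨(e, 0), h2, by rw [near0, ← Sum.inl.inj h1]⟩
  · exact absurd h2 (by simp)
  · exact absurd h1 (by simp)
  · exact absurd h2 (by simp)
  · exact ⟨(e, 1), h2, by rw [near1, ← Sum.inl.inj h1]⟩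
  · exact absurd h2 (by simp)

lemma adj_inr0_char {e : PetersenEdge} {x : VV}
    (h : subdivPetersen.Adj (inr (e, 0)) x) : x = inl (aE e) ∨ x = inr (e, 1) := by
  rw [adj_unfold] at h
  rcases h with ⟨e', ⟨h1, h2⟩ | ⟨h1, h2⟩⟩ | ⟨e', ⟨h1, h2⟩ | ⟨h1, h2⟩⟩ |
    ⟨e', ⟨h1, h2⟩ | ⟨h1, h2⟩⟩
  · exact absurd h1 (by simp)
  · obtain ⟨rfl, -⟩ := Prod.mk.injEq .. ▸ (Sum.inr.inj h2)
    exact Or.inl h1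
  · obtain ⟨rfl, -⟩ := Prod.mk.injEq .. ▸ (Sum.inr.inj h1)
    exact Or.inr h2
  · have := (Sum.inr.inj h2)
    have h0 : (0 : Fin 2) = 1 := congrArg Prod.snd this
    exact absurd h0 (by omega)
  · exact absurd h1 (by simp)
  · have := (Sum.inr.inj h2)
    have h0 : (0 : Fin 2) = 1 := congrArg Prod.snd this
    exact absurd h0 (by omega)

lemma adj_inr1_char {e : PetersenEdge} {x : VV}
    (h : subdivPetersen.Adj (inr (e, 1)) x) : x = inr (e, 0) ∨ x = inl (bE e) := by
  rw [adj_unfold] at h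
  rcases h with ⟨e', ⟨h1, h2⟩ | ⟨h1, h2⟩⟩ | ⟨e', ⟨h1, h2⟩ | ⟨h1, h2⟩⟩ |
    ⟨e', ⟨h1, h2⟩ | ⟨h1, h2⟩⟩
  · exact absurd h1 (by simp)
  · have := (Sum.inr.inj h2)
    have h0 : (1 : Fin 2) = 0 := congrArg Prod.snd this
    exact absurd h0 (by omega)
  · have := (Sum.inr.inj h1)
    have h0 : (1 : Fin 2) = 0 := congrArg Prod.snd this
    exact absurd h0 (by omega)
  · obtain ⟨rfl, -⟩ := Prod.mk.injEq .. ▸ (Sum.inr.inj h2)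
    exact Or.inl h1
  · exact absurd h1 (by simp)
  · obtain ⟨rfl, -⟩ := Prod.mk.injEq .. ▸ (Sum.inr.inj h2)
    exact Or.inr h1

lemma adj_mid (e : PetersenEdge) :
    subdivPetersen.Adj (inr (e, 1)) (inr (e, 0)) :=
  (adj_unfold _ _).mpr (Or.inr (Or.inl ⟨e, Or.inr ⟨rfl, rfl⟩⟩))

lemma adj_mid' (e : PetersenEdge) :
    subdivPetersen.Adj (inr (e, 0)) (inr (e, 1)) :=
  (adj_unfold _ _).mpr (Or.inr (Or.inl ⟨e, Or.inl ⟨rfl, rfl⟩⟩))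

lemma adj_near (m : M2) : subdivPetersen.Adj (inl (near m)) (inr m) := by
  obtain ⟨e, i⟩ := m
  rcases fin2 i with rfl | rfl
  · exact (adj_unfold _ _).mpr (Or.inl ⟨e, Or.inl ⟨by rw [near0], rfl⟩⟩)
  · exact (adj_unfold _ _).mpr (Or.inr (Or.inr ⟨e, Or.inl ⟨by rw [near1], rfl⟩⟩))

/-- The "pair component" associated to a subdivision vertex. -/
noncomputable def Pc (m : M2) : Finset VV := {inl (other m), inr m}

lemma mem_Pc_iff (m : M2) (x : VV) : x ∈ Pc m ↔ x = inl (other m) ∨ x = inr m := by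
  simp [Pc]

section Cover

variable (C : Finset (Finset VV × Finset VV)) (hC : subdivPetersen.IsCover C)

include hC

lemma comp_of_edge {u v : VV} (huv : subdivPetersen.Adj u v)
    (hv : ({v} : Finset VV) ∉ sjComponents C) :
    ∃ S ∈ sjComponents C, v ∈ S ∧ (∃ x ∈ S, x ≠ v) ∧
      ∀ x ∈ S, subdivPetersen.Adj u x := by
  obtain ⟨p, hp, hcase⟩ := (hC.2 u v).mp huv
  rcases hcase with ⟨hu, hv'⟩ | ⟨hu, hv'⟩
  · have hmem : p.2 ∈ sjComponents C := by
      simp only [sjComponents, Finset.mem_union, Finset.mem_image]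
      exact Or.inr ⟨p, hp, rfl⟩
    refine ⟨p.2, hmem, hv', ?_, fun x hx => (hC.2 u x).mpr ⟨p, hp, Or.inl ⟨hu, hx⟩⟩⟩
    by_contra hno
    push_neg at hno
    exact hv (by
      have hps : p.2 = {v} := eq_singleton_iff_unique_mem.mpr ⟨hv', hno⟩
      rw [← hps]; exact hmem)
  · have hmem : p.1 ∈ sjComponents C := by
      simp only [sjComponents, Finset.mem_union, Finset.mem_image]
      exact Or.inl ⟨p, hp, rfl⟩
    refine ⟨p.1, hmem, hv', ?_, fun x hx => (hC.2 u x).mpr ⟨p, hp, Or.inr ⟨hu, hx⟩⟩⟩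
    by_contra hno
    push_neg at hno
    exact hv (by
      have hps : p.1 = {v} := eq_singleton_iff_unique_mem.mpr ⟨hv', hno⟩
      rw [← hps]; exact hmem)

lemma Pc_mem_of_mid {m : M2} (h : ({inr m} : Finset VV) ∉ sjComponents C) :
    Pc m ∈ sjComponents C := by
  obtain ⟨e, i⟩ := m
  rcases fin2 i with rfl | rfl
  · obtain ⟨S, hS, hvS, ⟨x, hxS, hxne⟩, hall⟩ := comp_of_edge C hC (adj_mid e) h
    have hx : x = inl (bE e) := by
      rcases adj_inr1_char (hall x hxS) with h' | h'
      · exact absurd h' hxne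
      · exact h'
    have hSeq : S = Pc (e, 0) := by
      apply Subset.antisymm
      · intro y hy
        rcases adj_inr1_char (hall y hy) with h' | h' <;>
          simp [mem_Pc_iff, h']
      · intro y hy
        rcases (mem_Pc_iff _ _).mp hy with rfl | rfl
        · simpa [← hx] using hxS
        · exact hvS
    rw [← hSeq]; exact hS
  · obtain ⟨S, hS, hvS, ⟨x, hxS, hxne⟩, hall⟩ := comp_of_edge C hC (adj_mid' e) h
    have hx : x = inl (aE e) := by
      rcases adj_inr0_char (hall x hxS) with h' | h'
      · exact h'
      · exact absurd h' hxne
    have hSeq : S = Pc (e, 1) := by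
      apply Subset.antisymm
      · intro y hy
        rcases adj_inr0_char (hall y hy) with h' | h' <;>
          simp [mem_Pc_iff, h']
      · intro y hy
        rcases (mem_Pc_iff _ _).mp hy with rfl | rfl
        · simpa [← hx] using hxS
        · exact hvS
    rw [← hSeq]; exact hS

lemma Pc_mem_of_end {m : M2} (h : ({inl (other m)} : Finset VV) ∉ sjComponents C) :
    Pc m ∈ sjComponents C := by
  obtain ⟨e, i⟩ := m
  rcases fin2 i with rfl | rfl
  · rw [other0] at h
    have hadj : subdivPetersen.Adj (inr (e, 1)) (inl (bE e)) :=
      (adj_unfold _ _).mpr (Or.inr (Or.inr ⟨e, Or.inr ⟨rfl, rfl⟩⟩))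
    obtain ⟨S, hS, hvS, ⟨x, hxS, hxne⟩, hall⟩ := comp_of_edge C hC hadj h
    have hx : x = inr (e, 0) := by
      rcases adj_inr1_char (hall x hxS) with h' | h'
      · exact h'
      · exact absurd h' hxne
    have hSeq : S = Pc (e, 0) := by
      apply Subset.antisymm
      · intro y hy
        rcases adj_inr1_char (hall y hy) with h' | h' <;>
          simp [mem_Pc_iff, h']
      · intro y hy
        rcases (mem_Pc_iff _ _).mp hy with rfl | rfl
        · simpa using hvS
        · simpa [← hx] using hxS
    rw [← hSeq]; exact hS
  · rw [other1] at h
    have hadj : subdivPetersen.Adj (inr (e, 0)) (inl (aE e)) :=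
      (adj_unfold _ _).mpr (Or.inl ⟨e, Or.inr ⟨rfl, rfl⟩⟩)
    obtain ⟨S, hS, hvS, ⟨x, hxS, hxne⟩, hall⟩ := comp_of_edge C hC hadj h
    have hx : x = inr (e, 1) := by
      rcases adj_inr0_char (hall x hxS) with h' | h'
      · exact absurd h' hxne
      · exact h'
    have hSeq : S = Pc (e, 1) := by
      apply Subset.antisymm
      · intro y hy
        rcases adj_inr0_char (hall y hy) with h' | h' <;>
          simp [mem_Pc_iff, h']
      · intro y hy
        rcases (mem_Pc_iff _ _).mp hy with rfl | rfl
        · simpa using hvS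
        · simpa [← hx] using hxS
    rw [← hSeq]; exact hS

lemma T_mem {m : M2} (h : ({inr m} : Finset VV) ∉ sjComponents C) :
    ∃ T, T ∈ sjComponents C ∧ (inr m : VV) ∈ T ∧ (∃ x ∈ T, x ≠ inr m) ∧
      ∀ x ∈ T, ∃ m' : M2, x = inr m' ∧ near m' = near m := by
  obtain ⟨S, hS, hvS, hx, hall⟩ := comp_of_edge C hC (adj_near m) h
  exact ⟨S, hS, hvS, hx, fun x hxS => adj_inl_char (hall x hxS)⟩

end Cover

/-! ### Petersen counting: each vertex has exactly 3 incident half-gadgets -/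

lemma compl_card (v : PetersenVert) : (v.1ᶜ : Finset (Fin 5)).card = 3 := by
  rw [Finset.card_compl, v.2]
  rfl

noncomputable def mkEdge (v w : PetersenVert) (hd : Disjoint v.1 w.1) : PetersenEdge :=
  ⟨s(v, w), v, w, rfl, hd⟩

lemma mkEdge_spec (v w : PetersenVert) (hd : Disjoint v.1 w.1) :
    (aE (mkEdge v w hd) = v ∧ bE (mkEdge v w hd) = w) ∨
    (aE (mkEdge v w hd) = w ∧ bE (mkEdge v w hd) = v) := by
  have h := mk_aE_bE (mkEdge v w hd)
  have h2 : s(aE (mkEdge v w hd), bE (mkEdge v w hd)) = s(v, w) := h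
  rw [Sym2.eq_iff] at h2
  exact h2

lemma card_filter_other (v : PetersenVert) :
    ((univ : Finset M2).filter (fun m => other m = v)).card = 3 := by
  classical
  have hpc : (Finset.powersetCard 2 (v.1ᶜ)).card = 3 := by
    rw [Finset.card_powersetCard, compl_card]
    rfl
  rw [← hpc]
  apply card_nbij (i := fun m => (near m).1)
  · intro m hm
    have hv : other m = v := (mem_filter.mp hm).2
    rw [Finset.mem_coe, Finset.mem_powersetCard]
    constructor
    · intro x hx
      rw [Finset.mem_compl]
      have hd : Disjoint (near m).1 v.1 := by
        rw [← hv]; exact disj_near_other m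
      exact Finset.disjoint_left.mp hd hx
    · exact (near m).2
  · intro m hm m' hm' hmm
    simp only [coe_filter, Set.mem_setOf_eq] at hm hm'
    have hv : other m = v := hm.2
    have hv' : other m' = v := hm'.2
    have hnear : near m = near m' := Subtype.ext hmm
    have hee : m.1 = m'.1 := by
      apply Subtype.ext
      rw [← e_eq m, ← e_eq m', hv, hv', hnear]
    obtain ⟨e, i⟩ := m
    obtain ⟨e', i'⟩ := m'
    simp only at hee
    subst hee
    rcases fin2 i with rfl | rfl <;> rcases fin2 i' with rfl | rfl
    · rfl
    · rw [other0] at hv; rw [other1] at hv'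
      exact absurd (hv'.trans hv.symm) (aE_ne_bE e)
    · rw [other1] at hv; rw [other0] at hv'
      exact absurd (hv.trans hv'.symm) (aE_ne_bE e)
    · rfl
  · intro u hu
    obtain ⟨hsub, hcard⟩ := Finset.mem_powersetCard.mp (Finset.mem_coe.mp hu)
    have hd : Disjoint v.1 (⟨u, hcard⟩ : PetersenVert).1 := by
      rw [Finset.disjoint_left]
      intro x hx hxu
      exact (Finset.mem_compl.mp (hsub hxu)) hx
    rcases mkEdge_spec v ⟨u, hcard⟩ hd with ⟨h1, h2⟩ | ⟨h1, h2⟩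
    · refine ⟨(mkEdge v ⟨u, hcard⟩ hd, 1), Finset.mem_coe.mpr (mem_filter.mpr
        ⟨mem_univ _, by rw [other1]; exact h1⟩), ?_⟩
      show (near (mkEdge v ⟨u, hcard⟩ hd, 1)).1 = u
      rw [near1, h2]
    · refine ⟨(mkEdge v ⟨u, hcard⟩ hd, 0), Finset.mem_coe.mpr (mem_filter.mpr
        ⟨mem_univ _, by rw [other0]; exact h2⟩), ?_⟩
      show (near (mkEdge v ⟨u, hcard⟩ hd, 0)).1 = u
      rw [near0, h1]

noncomputable def pSwap (m : M2) : M2 := (m.1, if m.2 = 0 then 1 else 0)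

lemma near_pSwap (m : M2) : near (pSwap m) = other m := by
  obtain ⟨e, i⟩ := m
  rcases fin2 i with rfl | rfl <;> simp [pSwap, near, other]

lemma other_pSwap (m : M2) : other (pSwap m) = near m := by
  obtain ⟨e, i⟩ := m
  rcases fin2 i with rfl | rfl <;> simp [pSwap, near, other]

lemma pSwap_pSwap (m : M2) : pSwap (pSwap m) = m := by
  obtain ⟨e, i⟩ := m
  rcases fin2 i with rfl | rfl <;> simp [pSwap]

lemma card_filter_near (w : PetersenVert) :
    ((univ : Finset M2).filter (fun m => near m = w)).card = 3 := by
  rw [← card_filter_other w]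
  apply card_nbij' (i := pSwap) (j := pSwap)
  · intro m hm
    rw [Finset.mem_coe, mem_filter] at hm ⊢
    exact ⟨mem_univ _, by rw [other_pSwap]; exact hm.2⟩
  · intro m hm
    rw [Finset.mem_coe, mem_filter] at hm ⊢
    exact ⟨mem_univ _, by rw [near_pSwap]; exact hm.2⟩
  · intro m _; exact pSwap_pSwap m
  · intro m _; exact pSwap_pSwap m

instance : Nonempty M2 := by
  have h1 : ({0, 1} : Finset (Fin 5)).card = 2 := by decide
  have h2 : ({2, 3} : Finset (Fin 5)).card = 2 := by decide
  have hd : Disjoint ({0, 1} : Finset (Fin 5)) ({2, 3} : Finset (Fin 5)) := by decide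
  exact ⟨(mkEdge ⟨{0, 1}, h1⟩ ⟨{2, 3}, h2⟩ hd, 0)⟩

/-! ### The main counting lemma -/

lemma main (C : Finset (Finset VV × Finset VV)) (hC : subdivPetersen.IsCover C) :
    Fintype.card VV ≤ (sjComponents C).card := by
  classical
  set K := sjComponents C with hK
  -- the three disjoint families of components
  let SS := K.filter fun S => S.card = 1
  let PP := K.filter fun S => ∃ m : M2, S = Pc m
  let TT := K.filter fun S => (∀ x ∈ S, ∃ m : M2, x = inr m) ∧ 2 ≤ S.card
  have hPc_card : ∀ m : M2, (Pc m).card = 2 := by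
    intro m
    apply card_pair
    simp
  have hSP : Disjoint SS PP := by
    rw [disjoint_left]
    intro S hS hP
    obtain ⟨-, h1⟩ := mem_filter.mp hS
    obtain ⟨-, m, rfl⟩ := mem_filter.mp hP
    rw [hPc_card m] at h1
    omega
  have hSPT : Disjoint (SS ∪ PP) TT := by
    rw [disjoint_left]
    intro S hS hT
    obtain ⟨-, hall, h2⟩ := mem_filter.mp hT
    rcases mem_union.mp hS with h | h
    · obtain ⟨-, h1⟩ := mem_filter.mp h
      omega
    · obtain ⟨-, m, rfl⟩ := mem_filter.mp h
      obtain ⟨m', hm'⟩ := hall (inl (other m)) (by simp [Pc])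
      exact absurd hm' (by simp)
  have hunion : SS.card + PP.card + TT.card ≤ K.card := by
    have hsub : (SS ∪ PP ∪ TT) ⊆ K :=
      union_subset (union_subset (filter_subset _ _) (filter_subset _ _))
        (filter_subset _ _)
    calc SS.card + PP.card + TT.card
        = (SS ∪ PP ∪ TT).card := by
          rw [card_union_of_disjoint hSPT, card_union_of_disjoint hSP]
      _ ≤ K.card := card_le_card hsub
  -- A : vertices whose singleton is a component
  let A := (univ : Finset VV).filter fun x => ({x} : Finset VV) ∈ K
  have hA : A.card ≤ SS.card := by
    apply card_le_card_of_injOn (fun x => ({x} : Finset VV))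
    · intro x hx
      exact mem_filter.mpr ⟨(mem_filter.mp hx).2, card_singleton _⟩
    · intro x _ y _ h
      have h2 : ({x} : Finset VV) = {y} := h
      exact singleton_inj.mp h2
  -- X : half-gadgets whose pair component occurs
  let X := (univ : Finset M2).filter fun m => Pc m ∈ K
  have hXP : X.card ≤ PP.card := by
    apply card_le_card_of_injOn (fun m => Pc m)
    · intro m hm
      exact mem_filter.mpr ⟨(mem_filter.mp hm).2, m, rfl⟩
    · intro m _ m' _ h
      have h2 : Pc m = Pc m' := h
      have hmem : (inr m : VV) ∈ Pc m' := by
        rw [← h2, mem_Pc_iff]; right; rfl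
      rcases (mem_Pc_iff _ _).mp hmem with h' | h'
      · exact absurd h' (by simp)
      · exact Sum.inr.inj h'
  let XA := X.filter fun m => ({inr m} : Finset VV) ∈ K
  let XB := X.filter fun m => ¬ (({inr m} : Finset VV) ∈ K)
  have hXsplit : XA.card + XB.card = X.card :=
    card_filter_add_card_filter_not _
  -- BM : subdivision vertices not in A
  let BM := (univ : Finset M2).filter fun m => ({inr m} : Finset VV) ∉ K
  have hBM : BM.card ≤ XB.card := by
    apply card_le_card
    intro m hm
    have h := (mem_filter.mp hm).2
    exact mem_filter.mpr ⟨mem_filter.mpr ⟨mem_univ _, Pc_mem_of_mid C hC h⟩, h⟩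
  -- BO : original vertices not in A
  let BO := (univ : Finset PetersenVert).filter fun v => ({inl v} : Finset VV) ∉ K
  let BOY := BO.filter fun v => ∀ m : M2, other m = v → ({inr m} : Finset VV) ∉ K
  let BOn := BO.filter fun v => ¬ (∀ m : M2, other m = v → ({inr m} : Finset VV) ∉ K)
  have hBOsplit : BOY.card + BOn.card = BO.card :=
    card_filter_add_card_filter_not _
  have hBOn : BOn.card ≤ XA.card := by
    have hsel : ∀ v ∈ BOn, ∃ m : M2, other m = v ∧ ({inr m} : Finset VV) ∈ K := by
      intro v hv
      have h := (mem_filter.mp hv).2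
      push_neg at h
      exact h
    choose! f hf1 hf2 using hsel
    apply card_le_card_of_injOn f
    · intro v hv
      have hvB : ({inl v} : Finset VV) ∉ K := (mem_filter.mp (mem_filter.mp hv).1).2
      refine mem_filter.mpr ⟨mem_filter.mpr ⟨mem_univ _, ?_⟩, hf2 v hv⟩
      apply Pc_mem_of_end C hC
      rw [hf1 v hv]
      exact hvB
    · intro v hv w hw h
      rw [← hf1 v hv, ← hf1 w hw, h]
  have hBOY : BOY.card ≤ TT.card := by
    let Z := (univ : Finset M2).filter fun m => other m ∈ BOY
    have hZB : ∀ m ∈ Z, ({inr m} : Finset VV) ∉ K := by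
      intro m hm
      have h := (mem_filter.mp (mem_filter.mp hm).2).2
      exact h m rfl
    have hsel : ∀ m ∈ Z, ∃ T, T ∈ K ∧ (inr m : VV) ∈ T ∧ (∃ x ∈ T, x ≠ inr m) ∧
        ∀ x ∈ T, ∃ m' : M2, x = inr m' ∧ near m' = near m := by
      intro m hm
      exact T_mem C hC (hZB m hm)
    choose! g hg1 hg2 hg3 hg4 using hsel
    have hZcard : Z.card = 3 * BOY.card := by
      rw [card_eq_sum_card_fiberwise (f := fun m => other m) (s := Z) (t := BOY)
        (fun m hm => (mem_filter.mp (Finset.mem_coe.mp hm)).2)]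
      rw [Finset.sum_congr rfl (g := fun _ => 3) (fun v hv => ?_), Finset.sum_const,
        smul_eq_mul, mul_comm]
      have : (Z.filter fun m => other m = v) =
          ((univ : Finset M2).filter fun m => other m = v) := by
        ext m
        simp only [Z, mem_filter, mem_univ, true_and]
        constructor
        · rintro ⟨-, h2⟩; exact h2
        · intro h2; exact ⟨by rw [h2]; exact hv, h2⟩
      rw [this, card_filter_other]
    have himg : Z.image g ⊆ TT := by
      intro T hT
      obtain ⟨m, hm, rfl⟩ := mem_image.mp hT
      refine mem_filter.mpr ⟨hg1 m hm, ?_, ?_⟩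
      · intro x hx
        obtain ⟨m', hm', -⟩ := hg4 m hm x hx
        exact ⟨m', hm'⟩
      · obtain ⟨x, hx, hxne⟩ := hg3 m hm
        exact one_lt_card.mpr ⟨x, hx, inr m, hg2 m hm, hxne⟩
    have hfiber : ∀ T ∈ Z.image g, (Z.filter fun m => g m = T).card ≤ 3 := by
      intro T hT
      obtain ⟨m0, hm0, rfl⟩ := mem_image.mp hT
      have hsub : (Z.filter fun m => g m = g m0) ⊆
          ((univ : Finset M2).filter fun m => near m = near m0) := by
        intro m' hm'
        obtain ⟨hm'Z, hgm'⟩ := mem_filter.mp hm'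
        have hx : (inr m' : VV) ∈ g m0 := by
          rw [← hgm']
          exact hg2 m' hm'Z
        obtain ⟨m'', hm''eq, hm''near⟩ := hg4 m0 hm0 (inr m') hx
        have heq : m' = m'' := Sum.inr.inj hm''eq
        exact mem_filter.mpr ⟨mem_univ _, heq ▸ hm''near⟩
      calc (Z.filter fun m => g m = g m0).card
          ≤ ((univ : Finset M2).filter fun m => near m = near m0).card :=
            card_le_card hsub
        _ = 3 := card_filter_near _
    have hZle : Z.card ≤ 3 * (Z.image g).card := card_le_mul_card_image Z 3 hfiber
    have himgcard : (Z.image g).card ≤ TT.card := card_le_card himg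
    omega
  -- the total count
  let An := (univ : Finset VV).filter fun x => ¬ (({x} : Finset VV) ∈ K)
  have h1 : A.card + An.card = Fintype.card VV := by
    rw [card_filter_add_card_filter_not, card_univ]
  have h2 : An.card = BO.card + BM.card := by
    let AnL := An.filter fun x => ∃ v : PetersenVert, x = inl v
    let AnR := An.filter fun x => ¬ (∃ v : PetersenVert, x = inl v)
    have hsplit : AnL.card + AnR.card = An.card :=
      card_filter_add_card_filter_not _
    have hL : AnL = BO.image inl := by
      ext x
      simp only [AnL, An, BO, mem_filter, mem_univ, true_and, mem_image]
      constructor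
      · rintro ⟨h1', v, rfl⟩
        exact ⟨v, ⟨h1', rfl⟩⟩
      · rintro ⟨v, ⟨hv, rfl⟩⟩
        exact ⟨hv, v, rfl⟩
    have hR : AnR = BM.image inr := by
      ext x
      simp only [AnR, An, BM, mem_filter, mem_univ, true_and, mem_image]
      constructor
      · rintro ⟨h1', h2'⟩
        cases x with
        | inl v => exact absurd ⟨v, rfl⟩ h2'
        | inr m => exact ⟨m, ⟨h1', rfl⟩⟩
      · rintro ⟨m, ⟨hm, rfl⟩⟩
        exact ⟨hm, by simp⟩
    rw [← hsplit, hL, hR, card_image_of_injective _ Sum.inl_injective,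
      card_image_of_injective _ Sum.inr_injective]
  omega

/-! ### Existence of a cover -/

lemma cover_exists : ∃ C : Finset (Finset VV × Finset VV), subdivPetersen.IsCover C := by
  classical
  refine ⟨((univ : Finset (VV × VV)).filter
      (fun q => subdivPetersen.Adj q.1 q.2)).image (fun q => ({q.1}, {q.2})), ?_, ?_⟩
  · intro p hp
    obtain ⟨q, -, rfl⟩ := mem_image.mp hp
    exact ⟨singleton_nonempty _, singleton_nonempty _⟩
  · intro u v
    constructor
    · intro h
      exact ⟨({u}, {v}), mem_image.mpr ⟨(u, v), mem_filter.mpr ⟨mem_univ _, h⟩, rfl⟩,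
        Or.inl ⟨mem_singleton_self _, mem_singleton_self _⟩⟩
    · rintro ⟨p, hp, hcase⟩
      obtain ⟨q, hq, rfl⟩ := mem_image.mp hp
      have hab : subdivPetersen.Adj q.1 q.2 := (mem_filter.mp hq).2
      rcases hcase with ⟨hu, hv⟩ | ⟨hu, hv⟩
      · rw [mem_singleton.mp hu, mem_singleton.mp hv]
        exact hab
      · rw [mem_singleton.mp hu, mem_singleton.mp hv]
        exact subdivPetersen.symm _ _ hab

end Stmt17

/-- The double subdivision of the Petersen graph has gap 0. -/
theorem stmt_17 : subdivPetersen.gap = 0 := by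
  have hle : Fintype.card (PetersenVert ⊕ PetersenEdge × Fin 2) ≤ subdivPetersen.stp := by
    obtain ⟨C₀, hC₀⟩ := Stmt17.cover_exists
    have hne : {n | ∃ C : Finset (Finset Stmt17.VV × Finset Stmt17.VV),
        subdivPetersen.IsCover C ∧ (sjComponents C).card = n}.Nonempty :=
      ⟨(sjComponents C₀).card, C₀, hC₀, rfl⟩
    obtain ⟨C, hC, hcard⟩ := Nat.sInf_mem hne
    calc Fintype.card (PetersenVert ⊕ PetersenEdge × Fin 2)
        ≤ (sjComponents C).card := Stmt17.main C hC
      _ = subdivPetersen.stp := hcard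
  simp only [LoopGraph.gap]
  omega
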